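/- Let G be an undirected graph with distinct nodes s and t, and let F be a balanced arc set in G⃗. Then F decomposes into a collection P_st of arc-disjoint s–t paths, a collection P_ts of arc-disjoint t–s paths, and a collection C of arc-disjoint cycles (all parts pairwise arc-disjoint and together covering F), and every such decomposition satisfies |P_st| − |P_ts| = val(F). -/

import Mathlib

/-!
The digraph `G⃗` associated with the multigraph `G : E → V × V` has the arc set
`E × Bool`: the arc `(e, true)` traverses edge `e` from `(G e).1` to `(G e).2`,
and `(e, false)` is the oppositely directed arc.
-/

/-- The tail of an arc of `G⃗`. -/
def arcTail {V E : Type} (G : E → V × V) (a : E × Bool) : V :=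
  cond a.2 (G a.1).1 (G a.1).2

/-- The head of an arc of `G⃗`. -/
def arcHead {V E : Type} (G : E → V × V) (a : E × Bool) : V :=
  cond a.2 (G a.1).2 (G a.1).1

/-- The reverse arc `a⁻¹`. -/
def arcInv {E : Type} (a : E × Bool) : E × Bool := (a.1, !a.2)

/-- `|F ∩ δ^out(v)|`, the number of arcs of `F` leaving `v`. -/
noncomputable def outCount {V E : Type} (G : E → V × V) (F : Finset (E × Bool)) (v : V) : ℕ :=
  Set.ncard {a : E × Bool | a ∈ F ∧ arcTail G a = v}

/-- `|F ∩ δ^in(v)|`, the number of arcs of `F` entering `v`. -/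
noncomputable def inCount {V E : Type} (G : E → V × V) (F : Finset (E × Bool)) (v : V) : ℕ :=
  Set.ncard {a : E × Bool | a ∈ F ∧ arcHead G a = v}

/-- `F ⊆ AG⃗` is balanced (w.r.t. the source `s` and the sink `t`) if
`|F ∩ δ^in(v)| = |F ∩ δ^out(v)|` for every `v ∈ VG − {s, t}`. -/
def BalancedArcs {V E : Type} (G : E → V × V) (s t : V) (F : Finset (E × Bool)) : Prop :=
  ∀ v : V, v ≠ s → v ≠ t → inCount G F v = outCount G F v

/-- The value `val(F) = |F ∩ δ^out(s)| − |F ∩ δ^in(s)|` of an arc set. -/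
noncomputable def bval {V E : Type} (G : E → V × V) (s : V) (F : Finset (E × Bool)) : ℤ :=
  (outCount G F s : ℤ) - (inCount G F s : ℤ)

/-- Directed walks in `G⃗`. -/
inductive DWalk {V E : Type} (G : E → V × V) : V → V → Type where
  | nil (v : V) : DWalk G v v
  | cons {u v w : V} (a : E × Bool) (ht : arcTail G a = u) (hh : arcHead G a = v)
      (tail : DWalk G v w) : DWalk G u w

namespace DWalk
/-- The list of arcs traversed by a directed walk. -/
def arcs {V E : Type} {G : E → V × V} : {u v : V} → DWalk G u v → List (E × Bool)
  | _, _, nil _ => []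
  | _, _, cons a _ _ p => a :: p.arcs
end DWalk

/-- The arcs of the residual digraph `G⃗_F = (VG, (AG⃗ − F) ∪ F⁻¹)`. -/
def residArcs {E : Type} (F : Finset (E × Bool)) : Set (E × Bool) :=
  {a | a ∉ F ∨ arcInv a ∈ F}

/-- A decomposition of an arc set `F` into a collection `pst` of `s`–`t` paths,
a collection `pts` of `t`–`s` paths, and a collection `cyc` of cycles, all of
them pairwise arc-disjoint and together covering `F` exactly. -/
structure BalDecomp {V E : Type} (G : E → V × V) (s t : V) (F : Finset (E × Bool)) where
  /-- the `s`–`t` paths -/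
  pst : List (DWalk G s t)
  /-- the `t`–`s` paths -/
  pts : List (DWalk G t s)
  /-- the cycles (nonempty closed walks) -/
  cyc : List ((v : V) × DWalk G v v)
  cyc_ne : ∀ c ∈ cyc, c.2.arcs ≠ []
  /-- all the walks are pairwise arc-disjoint (and each is arc-simple) -/
  disj : ((pst.map DWalk.arcs ++ pts.map DWalk.arcs ++
      cyc.map (fun c => c.2.arcs)).flatten).Nodup
  /-- together they use exactly the arcs of `F` -/
  cover : ∀ a : E × Bool,
    a ∈ (pst.map DWalk.arcs ++ pts.map DWalk.arcs ++
      cyc.map (fun c => c.2.arcs)).flatten ↔ a ∈ F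

namespace S6

attribute [local instance] Classical.propDecidable

variable {V E : Type} {G : E → V × V}

/-- number of arcs in a list with tail `x` -/
noncomputable def ctl (G : E → V × V) (x : V) (l : List (E × Bool)) : ℕ :=
  l.countP (fun a => decide (arcTail G a = x))

/-- number of arcs in a list with head `x` -/
noncomputable def chl (G : E → V × V) (x : V) (l : List (E × Bool)) : ℕ :=
  l.countP (fun a => decide (arcHead G a = x))

lemma flux (x : V) {u v : V} (w : DWalk G u v) :
    chl G x w.arcs + (if x = u then 1 else 0)
      = ctl G x w.arcs + (if x = v then 1 else 0) := by
  induction w with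
  | nil v => rfl
  | cons a ht hh tl ih =>
    subst ht; subst hh
    have e1 : (if x = arcHead G a then (1:ℕ) else 0) = (if arcHead G a = x then 1 else 0) := by
      by_cases h : arcHead G a = x
      · simp [h]
      · rw [if_neg (fun hx => h hx.symm), if_neg h]
    have e2 : (if x = arcTail G a then (1:ℕ) else 0) = (if arcTail G a = x then 1 else 0) := by
      by_cases h : arcTail G a = x
      · simp [h]
      · rw [if_neg (fun hx => h hx.symm), if_neg h]
    simp only [DWalk.arcs, ctl, chl, List.countP_cons, decide_eq_true_eq] at *
    rw [e2]
    rw [e1] at ih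
    omega

lemma countP_nodup_eq (l : List (E × Bool)) (hnd : l.Nodup) (p : (E × Bool) → Bool) :
    l.countP p = (l.toFinset.filter (fun a => p a = true)).card := by
  rw [List.countP_eq_length_filter, ← List.toFinset_filter,
    List.toFinset_card_of_nodup (hnd.filter p)]

lemma outCount_eq (F : Finset (E × Bool)) (x : V) :
    outCount G F x = (F.filter (fun a => arcTail G a = x)).card := by
  rw [outCount, ← Set.ncard_coe_finset]
  congr 1; ext a; simp

lemma inCount_eq (F : Finset (E × Bool)) (x : V) :
    inCount G F x = (F.filter (fun a => arcHead G a = x)).card := by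
  rw [inCount, ← Set.ncard_coe_finset]
  congr 1; ext a; simp

lemma ctl_eq_filter (l : List (E × Bool)) (hnd : l.Nodup) (x : V) :
    ctl G x l = (l.toFinset.filter (fun a => arcTail G a = x)).card := by
  rw [ctl, countP_nodup_eq l hnd]
  congr 1; ext a; simp

lemma chl_eq_filter (l : List (E × Bool)) (hnd : l.Nodup) (x : V) :
    chl G x l = (l.toFinset.filter (fun a => arcHead G a = x)).card := by
  rw [chl, countP_nodup_eq l hnd]
  congr 1; ext a; simp

lemma ctl_eq_of (F : Finset (E × Bool)) (l : List (E × Bool)) (x : V) (hnd : l.Nodup)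
    (hsub : ∀ a ∈ l, a ∈ F) (hmax : ∀ a ∈ F, arcTail G a = x → a ∈ l) :
    ctl G x l = outCount G F x := by
  rw [ctl_eq_filter l hnd, outCount_eq]
  congr 1; ext a
  simp only [Finset.mem_filter, List.mem_toFinset]
  exact ⟨fun ⟨h1, h2⟩ => ⟨hsub a h1, h2⟩, fun ⟨h1, h2⟩ => ⟨hmax a h1 h2, h2⟩⟩

lemma chl_eq_of (F : Finset (E × Bool)) (l : List (E × Bool)) (x : V) (hnd : l.Nodup)
    (hsub : ∀ a ∈ l, a ∈ F) (hmax : ∀ a ∈ F, arcHead G a = x → a ∈ l) :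
    chl G x l = inCount G F x := by
  rw [chl_eq_filter l hnd, inCount_eq]
  congr 1; ext a
  simp only [Finset.mem_filter, List.mem_toFinset]
  exact ⟨fun ⟨h1, h2⟩ => ⟨hsub a h1, h2⟩, fun ⟨h1, h2⟩ => ⟨hmax a h1 h2, h2⟩⟩

lemma ctl_le (F : Finset (E × Bool)) (l : List (E × Bool)) (x : V) (hnd : l.Nodup)
    (hsub : ∀ a ∈ l, a ∈ F) : ctl G x l ≤ outCount G F x := by
  rw [ctl_eq_filter l hnd, outCount_eq]
  exact Finset.card_le_card (Finset.filter_subset_filter _ (fun a ha => hsub a (by simpa using ha)))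

lemma chl_le (F : Finset (E × Bool)) (l : List (E × Bool)) (x : V) (hnd : l.Nodup)
    (hsub : ∀ a ∈ l, a ∈ F) : chl G x l ≤ inCount G F x := by
  rw [chl_eq_filter l hnd, inCount_eq]
  exact Finset.card_le_card (Finset.filter_subset_filter _ (fun a ha => hsub a (by simpa using ha)))

lemma outCount_sdiff (F : Finset (E × Bool)) (l : List (E × Bool)) (x : V) (hnd : l.Nodup)
    (hsub : ∀ a ∈ l, a ∈ F) :
    outCount G (F \ l.toFinset) x = outCount G F x - ctl G x l := by
  rw [outCount_eq, outCount_eq, ctl_eq_filter l hnd]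
  rw [show (F \ l.toFinset).filter (fun a => arcTail G a = x)
      = F.filter (fun a => arcTail G a = x) \ l.toFinset.filter (fun a => arcTail G a = x) by
    ext a; simp only [Finset.mem_filter, Finset.mem_sdiff, List.mem_toFinset]; tauto]
  rw [Finset.card_sdiff_of_subset]
  exact Finset.filter_subset_filter _ (fun a ha => hsub a (by simpa using ha))

lemma inCount_sdiff (F : Finset (E × Bool)) (l : List (E × Bool)) (x : V) (hnd : l.Nodup)
    (hsub : ∀ a ∈ l, a ∈ F) :
    inCount G (F \ l.toFinset) x = inCount G F x - chl G x l := by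
  rw [inCount_eq, inCount_eq, chl_eq_filter l hnd]
  rw [show (F \ l.toFinset).filter (fun a => arcHead G a = x)
      = F.filter (fun a => arcHead G a = x) \ l.toFinset.filter (fun a => arcHead G a = x) by
    ext a; simp only [Finset.mem_filter, Finset.mem_sdiff, List.mem_toFinset]; tauto]
  rw [Finset.card_sdiff_of_subset]
  exact Finset.filter_subset_filter _ (fun a ha => hsub a (by simpa using ha))

/-- concatenation of directed walks -/
def dappend : {u v w : V} → DWalk G u v → DWalk G v w → DWalk G u w
  | _, _, _, .nil _, q => q
  | _, _, _, .cons a ht hh p, q => .cons a ht hh (dappend p q)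

lemma arcs_dappend : ∀ {u v w : V} (p : DWalk G u v) (q : DWalk G v w),
    (dappend p q).arcs = p.arcs ++ q.arcs
  | _, _, _, .nil _, q => rfl
  | _, _, _, .cons a ht hh p, q => by
      simp [dappend, DWalk.arcs, arcs_dappend p q]

lemma exists_forward : ∀ (n : ℕ) (F : Finset (E × Bool)), F.card ≤ n → ∀ u : V,
    ∃ (v : V) (w : DWalk G u v), w.arcs.Nodup ∧ (∀ a ∈ w.arcs, a ∈ F) ∧
      ∀ a ∈ F, arcTail G a = v → a ∈ w.arcs := by
  intro n
  induction n with
  | zero =>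
    intro F hF u
    have hFe : F = ∅ := Finset.card_eq_zero.mp (le_antisymm hF (Nat.zero_le _))
    exact ⟨u, .nil u, by simp [DWalk.arcs], by simp [DWalk.arcs], by simp [hFe]⟩
  | succ n ih =>
    intro F hF u
    by_cases h : ∃ a ∈ F, arcTail G a = u
    · obtain ⟨a, haF, hta⟩ := h
      obtain ⟨v, w', hnd, hsub, hmax⟩ := ih (F.erase a)
        (by have := Finset.card_erase_of_mem haF; omega) (arcHead G a)
      refine ⟨v, .cons a hta rfl w', ?_, ?_, ?_⟩
      · simp only [DWalk.arcs, List.nodup_cons]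
        exact ⟨fun hc => (Finset.notMem_erase a F) (hsub a hc), hnd⟩
      · intro b hb
        rcases List.mem_cons.mp hb with hb | hb
        · exact hb ▸ haF
        · exact Finset.mem_of_mem_erase (hsub b hb)
      · intro b hbF htb
        by_cases hba : b = a
        · simp [DWalk.arcs, hba]
        · exact List.mem_cons_of_mem a (hmax b (Finset.mem_erase.mpr ⟨hba, hbF⟩) htb)
    · exact ⟨u, .nil u, by simp [DWalk.arcs], by simp [DWalk.arcs],
        fun a ha hta => absurd ⟨a, ha, hta⟩ h⟩

lemma exists_backward : ∀ (n : ℕ) (F : Finset (E × Bool)), F.card ≤ n → ∀ v : V,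
    ∃ (u : V) (w : DWalk G u v), w.arcs.Nodup ∧ (∀ a ∈ w.arcs, a ∈ F) ∧
      ∀ a ∈ F, arcHead G a = u → a ∈ w.arcs := by
  intro n
  induction n with
  | zero =>
    intro F hF v
    have hFe : F = ∅ := Finset.card_eq_zero.mp (le_antisymm hF (Nat.zero_le _))
    exact ⟨v, .nil v, by simp [DWalk.arcs], by simp [DWalk.arcs], by simp [hFe]⟩
  | succ n ih =>
    intro F hF v
    by_cases h : ∃ a ∈ F, arcHead G a = v
    · obtain ⟨a, haF, hha⟩ := h
      obtain ⟨u, w', hnd, hsub, hmax⟩ := ih (F.erase a)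
        (by have := Finset.card_erase_of_mem haF; omega) (arcTail G a)
      refine ⟨u, dappend w' (.cons a rfl hha (.nil v)), ?_, ?_, ?_⟩
      · rw [arcs_dappend]
        refine List.Nodup.append hnd (by simp [DWalk.arcs]) ?_
        intro b hb hb2
        simp only [DWalk.arcs, List.mem_singleton, List.mem_cons, List.not_mem_nil,
          or_false] at hb2
        exact (Finset.notMem_erase a F) (hb2 ▸ hsub b hb)
      · intro b hb
        rw [arcs_dappend] at hb
        rcases List.mem_append.mp hb with hb | hb
        · exact Finset.mem_of_mem_erase (hsub b hb)
        · simp only [DWalk.arcs, List.mem_cons, List.not_mem_nil, or_false] at hb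
          exact hb ▸ haF
      · intro b hbF htb
        rw [arcs_dappend]
        by_cases hba : b = a
        · exact List.mem_append.mpr (Or.inr (by simp [DWalk.arcs, hba]))
        · exact List.mem_append.mpr (Or.inl (hmax b (Finset.mem_erase.mpr ⟨hba, hbF⟩) htb))
    · exact ⟨v, .nil v, by simp [DWalk.arcs], by simp [DWalk.arcs],
        fun a ha hta => absurd ⟨a, ha, hta⟩ h⟩

lemma extract (s t : V) (F : Finset (E × Bool)) (hbal : BalancedArcs G s t F)
    (hne : F.Nonempty) :
    ∃ (u v : V) (w : DWalk G u v), w.arcs ≠ [] ∧ w.arcs.Nodup ∧ (∀ a ∈ w.arcs, a ∈ F) ∧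
      (u = v ∨ (u = s ∧ v = t) ∨ (u = t ∧ v = s)) ∧
      BalancedArcs G s t (F \ w.arcs.toFinset) := by
  obtain ⟨a, haF⟩ := hne
  obtain ⟨v, w1, hnd1, hsub1, hmax1⟩ :=
    exists_forward (F.erase a).card (F.erase a) le_rfl (arcHead G a)
  set W : DWalk G (arcTail G a) v := .cons a rfl rfl w1 with hW
  have hWarcs : W.arcs = a :: w1.arcs := rfl
  have hWnd : W.arcs.Nodup := by
    rw [hWarcs, List.nodup_cons]
    exact ⟨fun hc => (Finset.notMem_erase a F) (hsub1 a hc), hnd1⟩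
  have hWsub : ∀ b ∈ W.arcs, b ∈ F := by
    intro b hb
    rw [hWarcs] at hb
    rcases List.mem_cons.mp hb with hb | hb
    · exact hb ▸ haF
    · exact Finset.mem_of_mem_erase (hsub1 b hb)
  have hWmaxv : ∀ b ∈ F, arcTail G b = v → b ∈ W.arcs := by
    intro b hbF htb
    by_cases hba : b = a
    · simp [hWarcs, hba]
    · exact hWarcs ▸ List.mem_cons_of_mem a (hmax1 b (Finset.mem_erase.mpr ⟨hba, hbF⟩) htb)
  obtain ⟨u, w0, hnd0, hsub0, hmax0⟩ :=
    exists_backward (F \ W.arcs.toFinset).card (F \ W.arcs.toFinset) le_rfl (arcTail G a)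
  set W2 : DWalk G u v := dappend w0 W with hW2
  set l : List (E × Bool) := W2.arcs with hl
  have hlarcs : l = w0.arcs ++ W.arcs := arcs_dappend w0 W
  have hnd : l.Nodup := by
    rw [hlarcs]
    refine List.Nodup.append hnd0 hWnd ?_
    intro b hb hb2
    have := hsub0 b hb
    rw [Finset.mem_sdiff, List.mem_toFinset] at this
    exact this.2 hb2
  have hsub : ∀ b ∈ l, b ∈ F := by
    intro b hb
    rw [hlarcs] at hb
    rcases List.mem_append.mp hb with hb | hb
    · exact (Finset.mem_sdiff.mp (hsub0 b hb)).1
    · exact hWsub b hb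
  have ha_mem : a ∈ l := by
    rw [hlarcs]
    exact List.mem_append.mpr (Or.inr (by simp [hWarcs]))
  have hlne : l ≠ [] := fun h => by simp [h] at ha_mem
  have hmaxv : ∀ b ∈ F, arcTail G b = v → b ∈ l := by
    intro b hbF htb
    rw [hlarcs]
    exact List.mem_append.mpr (Or.inr (hWmaxv b hbF htb))
  have hmaxu : ∀ b ∈ F, arcHead G b = u → b ∈ l := by
    intro b hbF hhb
    by_cases hbW : b ∈ W.arcs
    · rw [hlarcs]; exact List.mem_append.mpr (Or.inr hbW)
    · rw [hlarcs]
      refine List.mem_append.mpr (Or.inl (hmax0 b ?_ hhb))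
      rw [Finset.mem_sdiff, List.mem_toFinset]
      exact ⟨hbF, hbW⟩
  have hctv : ctl G v l = outCount G F v := ctl_eq_of F l v hnd hsub hmaxv
  have hchu : chl G u l = inCount G F u := chl_eq_of F l u hnd hsub hmaxu
  have hv : v = u ∨ v = s ∨ v = t := by
    by_contra hcon
    push_neg at hcon
    obtain ⟨hvu, hvs, hvt⟩ := hcon
    have hf := flux (G := G) v W2
    rw [← hl, if_neg hvu, if_pos rfl] at hf
    have hle : chl G v l ≤ inCount G F v := chl_le F l v hnd hsub
    rw [hbal v hvs hvt] at hle
    omega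
  have hu : u = v ∨ u = s ∨ u = t := by
    by_contra hcon
    push_neg at hcon
    obtain ⟨huv, hus, hut⟩ := hcon
    have hf := flux (G := G) u W2
    rw [← hl, if_neg huv, if_pos rfl] at hf
    have hle : ctl G u l ≤ outCount G F u := ctl_le F l u hnd hsub
    rw [← hbal u hus hut] at hle
    omega
  have hcase : u = v ∨ (u = s ∧ v = t) ∨ (u = t ∧ v = s) := by
    rcases hu with h | h | h
    · exact Or.inl h
    · rcases hv with h' | h' | h'
      · exact Or.inl h'.symm
      · exact Or.inl (h.trans h'.symm)
      · exact Or.inr (Or.inl ⟨h, h'⟩)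
    · rcases hv with h' | h' | h'
      · exact Or.inl h'.symm
      · exact Or.inr (Or.inr ⟨h, h'⟩)
      · exact Or.inl (h.trans h'.symm)
  refine ⟨u, v, W2, hlne, hnd, hsub, hcase, ?_⟩
  intro x hxs hxt
  have hfx := flux (G := G) x W2
  rw [← hl] at hfx
  have hch_ct : chl G x l = ctl G x l := by
    rcases hcase with h | h | h
    · subst h; omega
    · obtain ⟨h1, h2⟩ := h
      rw [if_neg (h1 ▸ hxs), if_neg (h2 ▸ hxt)] at hfx
      omega
    · obtain ⟨h1, h2⟩ := h
      rw [if_neg (h1 ▸ hxt), if_neg (h2 ▸ hxs)] at hfx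
      omega
  rw [inCount_sdiff F l x hnd hsub, outCount_sdiff F l x hnd hsub, hbal x hxs hxt, hch_ct]

lemma glue (l L' : List (E × Bool)) (F : Finset (E × Bool)) (hnd : l.Nodup)
    (hsub : ∀ a ∈ l, a ∈ F) (hnd' : L'.Nodup)
    (hcov' : ∀ a, a ∈ L' ↔ a ∈ F \ l.toFinset) :
    (l ++ L').Nodup ∧ ∀ a, a ∈ l ++ L' ↔ a ∈ F := by
  constructor
  · refine List.Nodup.append hnd hnd' ?_
    intro b hb hb2
    have := (hcov' b).mp hb2
    rw [Finset.mem_sdiff, List.mem_toFinset] at this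
    exact this.2 hb
  · intro b
    rw [List.mem_append, hcov' b, Finset.mem_sdiff, List.mem_toFinset]
    constructor
    · rintro (h | h)
      · exact hsub b h
      · exact h.1
    · intro hbF
      by_cases hb : b ∈ l
      · exact Or.inl hb
      · exact Or.inr ⟨hbF, hb⟩

lemma exists_decomp (s t : V) : ∀ (n : ℕ) (F : Finset (E × Bool)), F.card ≤ n →
    BalancedArcs G s t F → Nonempty (BalDecomp G s t F) := by
  intro n
  induction n with
  | zero =>
    intro F hF _
    have hFe : F = ∅ := Finset.card_eq_zero.mp (le_antisymm hF (Nat.zero_le _))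
    exact ⟨⟨[], [], [], by simp, by simp, by simp [hFe]⟩⟩
  | succ n ih =>
    intro F hF hbal
    rcases Finset.eq_empty_or_nonempty F with hFe | hne
    · exact ⟨⟨[], [], [], by simp, by simp, by simp [hFe]⟩⟩
    obtain ⟨u, v, w, hwne, hwnd, hwsub, hcase, hbal'⟩ := extract s t F hbal hne
    set F' : Finset (E × Bool) := F \ w.arcs.toFinset with hF'
    have hcard : F'.card ≤ n := by
      have hss : F' ⊂ F := by
        refine Finset.ssubset_iff_of_subset (Finset.sdiff_subset) |>.mpr ?_
        obtain ⟨b, hb⟩ := List.exists_mem_of_ne_nil w.arcs hwne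
        exact ⟨b, hwsub b hb, by simp [hF', List.mem_toFinset, hb]⟩
      have := Finset.card_lt_card hss
      omega
    obtain ⟨d'⟩ := ih F' hcard hbal'
    have hglue := glue w.arcs
      ((d'.pst.map DWalk.arcs ++ d'.pts.map DWalk.arcs ++
        d'.cyc.map (fun c => c.2.arcs)).flatten) F hwnd hwsub d'.disj d'.cover
    rcases hcase with h | h | h
    · -- cycle case
      subst h
      refine ⟨⟨d'.pst, d'.pts, ⟨u, w⟩ :: d'.cyc, ?_, ?_, ?_⟩⟩
      · intro c hc
        rcases List.mem_cons.mp hc with hc | hc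
        · rw [hc]; exact hwne
        · exact d'.cyc_ne c hc
      · have hp : (d'.pst.map DWalk.arcs ++ d'.pts.map DWalk.arcs ++
            ((⟨u, w⟩ :: d'.cyc).map (fun c => c.2.arcs))).Perm
            (w.arcs :: (d'.pst.map DWalk.arcs ++ d'.pts.map DWalk.arcs ++
              d'.cyc.map (fun c => c.2.arcs))) := by
          rw [List.map_cons]
          exact List.perm_middle
        rw [(hp.flatten).nodup_iff, List.flatten_cons]
        exact hglue.1
      · intro b
        have hp : (d'.pst.map DWalk.arcs ++ d'.pts.map DWalk.arcs ++
            ((⟨u, w⟩ :: d'.cyc).map (fun c => c.2.arcs))).Perm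
            (w.arcs :: (d'.pst.map DWalk.arcs ++ d'.pts.map DWalk.arcs ++
              d'.cyc.map (fun c => c.2.arcs))) := by
          rw [List.map_cons]
          exact List.perm_middle
        rw [(hp.flatten).mem_iff, List.flatten_cons]
        exact hglue.2 b
    · -- s-t path case
      obtain ⟨h1, h2⟩ := h
      subst h1; subst h2
      refine ⟨⟨w :: d'.pst, d'.pts, d'.cyc, d'.cyc_ne, ?_, ?_⟩⟩
      · rw [List.map_cons, List.cons_append, List.cons_append, List.flatten_cons]
        exact hglue.1
      · intro b
        rw [List.map_cons, List.cons_append, List.cons_append, List.flatten_cons]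
        exact hglue.2 b
    · -- t-s path case
      obtain ⟨h1, h2⟩ := h
      subst h1; subst h2
      refine ⟨⟨d'.pst, w :: d'.pts, d'.cyc, d'.cyc_ne, ?_, ?_⟩⟩
      · have hp : (d'.pst.map DWalk.arcs ++ ((w :: d'.pts).map DWalk.arcs) ++
            d'.cyc.map (fun c => c.2.arcs)).Perm
            (w.arcs :: (d'.pst.map DWalk.arcs ++ d'.pts.map DWalk.arcs ++
              d'.cyc.map (fun c => c.2.arcs))) := by
          rw [List.map_cons, List.append_assoc, List.cons_append, List.append_assoc]
          exact List.perm_middle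
        rw [(hp.flatten).nodup_iff, List.flatten_cons]
        exact hglue.1
      · intro b
        have hp : (d'.pst.map DWalk.arcs ++ ((w :: d'.pts).map DWalk.arcs) ++
            d'.cyc.map (fun c => c.2.arcs)).Perm
            (w.arcs :: (d'.pst.map DWalk.arcs ++ d'.pts.map DWalk.arcs ++
              d'.cyc.map (fun c => c.2.arcs))) := by
          rw [List.map_cons, List.append_assoc, List.cons_append, List.append_assoc]
          exact List.perm_middle
        rw [(hp.flatten).mem_iff, List.flatten_cons]
        exact hglue.2 b

lemma sum_map_shift {α : Type} (L : List α) (f g : α → ℕ) (h : ∀ x ∈ L, f x = g x + 1) :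
    (L.map f).sum = (L.map g).sum + L.length := by
  induction L with
  | nil => simp
  | cons a L ih =>
    simp only [List.map_cons, List.sum_cons, List.length_cons,
      ih (fun x hx => h x (List.mem_cons_of_mem a hx)), h a List.mem_cons_self]
    omega

lemma sum_map_eq {α : Type} (L : List α) (f g : α → ℕ) (h : ∀ x ∈ L, f x = g x) :
    (L.map f).sum = (L.map g).sum := by
  rw [List.map_congr_left h]

lemma count_decomp (s t : V) (hst : s ≠ t) (F : Finset (E × Bool))
    (d : BalDecomp G s t F) :
    (d.pst.length : ℤ) - (d.pts.length : ℤ) = bval G s F := by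
  set L : List (E × Bool) := (d.pst.map DWalk.arcs ++ d.pts.map DWalk.arcs ++
      d.cyc.map (fun c => c.2.arcs)).flatten with hL
  have hct : ctl G s L = outCount G F s :=
    ctl_eq_of F L s d.disj (fun a ha => (d.cover a).mp ha) (fun a haF _ => (d.cover a).mpr haF)
  have hch : chl G s L = inCount G F s :=
    chl_eq_of F L s d.disj (fun a ha => (d.cover a).mp ha) (fun a haF _ => (d.cover a).mpr haF)
  have hctL : ctl G s L = (d.pst.map (fun w => ctl G s w.arcs)).sum
      + (d.pts.map (fun w => ctl G s w.arcs)).sum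
      + (d.cyc.map (fun c => ctl G s c.2.arcs)).sum := by
    rw [hL, ctl, List.countP_flatten, List.map_append, List.map_append,
      List.sum_append, List.sum_append, List.map_map, List.map_map, List.map_map]
    rfl
  have hchL : chl G s L = (d.pst.map (fun w => chl G s w.arcs)).sum
      + (d.pts.map (fun w => chl G s w.arcs)).sum
      + (d.cyc.map (fun c => chl G s c.2.arcs)).sum := by
    rw [hL, chl, List.countP_flatten, List.map_append, List.map_append,
      List.sum_append, List.sum_append, List.map_map, List.map_map, List.map_map]
    rfl
  have h1 : (d.pst.map (fun w => ctl G s w.arcs)).sum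
      = (d.pst.map (fun w => chl G s w.arcs)).sum + d.pst.length := by
    refine sum_map_shift _ _ _ (fun w _ => ?_)
    have hf := flux (G := G) s w
    rw [if_pos rfl, if_neg hst] at hf
    omega
  have h2 : (d.pts.map (fun w => chl G s w.arcs)).sum
      = (d.pts.map (fun w => ctl G s w.arcs)).sum + d.pts.length := by
    refine sum_map_shift _ _ _ (fun w _ => ?_)
    have hf := flux (G := G) s w
    rw [if_pos rfl, if_neg hst] at hf
    omega
  have h3 : (d.cyc.map (fun c => ctl G s c.2.arcs)).sum
      = (d.cyc.map (fun c => chl G s c.2.arcs)).sum := by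
    refine sum_map_eq _ _ _ (fun c _ => ?_)
    have hf := flux (G := G) s c.2
    omega
  rw [bval, ← hct, ← hch]
  omega

end S6

/-- Every balanced arc set `F` decomposes into arc-disjoint
`s`–`t` paths, `t`–`s` paths and cycles covering `F`, and every such
decomposition satisfies `|P_st| − |P_ts| = val F`. -/
theorem statement6 {V E : Type} [Fintype E]
    (G : E → V × V) (s t : V) (hst : s ≠ t)
    (F : Finset (E × Bool)) (hbal : BalancedArcs G s t F) :
    Nonempty (BalDecomp G s t F) ∧
      ∀ d : BalDecomp G s t F,
        (d.pst.length : ℤ) - (d.pts.length : ℤ) = bval G s F := by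
  exact ⟨S6.exists_decomp s t F.card F le_rfl hbal, fun d => S6.count_decomp s t hst F d⟩
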